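/- Let Γ₁, Δ₁, …, Γₙ, Δₙ be finite multisets of propositional variables. The hypersequent Γ₁ ⊢ Δ₁ | … | Γₙ ⊢ Δₙ is valid over ℚ (i.e., for every assignment v of rationals to the variables there exists an i with Σ_{a∈Γᵢ} v(a) ≤ Σ_{b∈Δᵢ} v(b)) if and only if there exist nonnegative integers λ₁,…,λₙ, not all zero, such that the multiset union ⋃ᵢ λᵢ·Γᵢ equals ⋃ᵢ λᵢ·Δᵢ. -/

import Mathlib

open Finset

/-- A hypersequent is a list of components, each a pair of finite multisets of
propositional variables (coded as naturals). It is valid over ℚ if every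
valuation makes the left sum ≤ the right sum in some component. -/
def HValid (G : List (Multiset ℕ × Multiset ℕ)) : Prop :=
  ∀ v : ℕ → ℚ, ∃ S ∈ G, (S.1.map v).sum ≤ (S.2.map v).sum

/-- A rational linear system solvable over ℝ is solvable over ℚ. -/
lemma rat_descent {κ ι : Type*} [Fintype κ] [Fintype ι] [DecidableEq κ]
    (A : κ → ι → ℚ) (b : κ → ℚ)
    (h : ∃ x : ι → ℝ, ∀ j, ∑ k, (A j k : ℝ) * x k = (b j : ℝ)) :
    ∃ x : ι → ℚ, ∀ j, ∑ k, A j k * x k = b j := by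
  classical
  by_contra hc
  push_neg at hc
  set T : (ι → ℚ) →ₗ[ℚ] (κ → ℚ) :=
    { toFun := fun x j => ∑ k, A j k * x k
      map_add' := by
        intro x y; funext j; simp [mul_add, Finset.sum_add_distrib]
      map_smul' := by
        intro r x; funext j; simp [Finset.mul_sum, mul_left_comm] } with hT
  have hbnot : b ∉ LinearMap.range T := by
    rintro ⟨x, rfl⟩
    obtain ⟨j, hj⟩ := hc x
    exact hj rfl
  obtain ⟨f, hfb, hfmap⟩ :=
    (LinearMap.range T).exists_dual_map_eq_bot_of_notMem hbnot inferInstance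
  set y : κ → ℚ := fun j => f (Pi.single j 1) with hy
  have hfeval : ∀ w : κ → ℚ, f w = ∑ j, w j * y j := by
    intro w
    conv_lhs => rw [pi_eq_sum_univ w, map_sum]
    refine Finset.sum_congr rfl fun j _ => ?_
    rw [map_smul]
    have hps : (fun j1 => if j = j1 then (1:ℚ) else 0) = Pi.single j 1 := by
      funext j1; simp [Pi.single_apply, eq_comm]
    rw [hps]; simp [hy, smul_eq_mul]
  have hfT : ∀ x : ι → ℚ, f (T x) = 0 := by
    intro x
    have : T x ∈ LinearMap.range T := ⟨x, rfl⟩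
    have := Submodule.mem_map_of_mem (f := f) this
    rw [hfmap] at this
    exact (Submodule.mem_bot ℚ).1 this
  -- yᵀ A = 0
  have hyA : ∀ k, ∑ j, y j * A j k = 0 := by
    intro k
    have := hfT (Pi.single k 1)
    rw [hfeval] at this
    have h2 : ∀ j, (T (Pi.single k 1)) j = A j k := by
      intro j
      simp [hT, Pi.single_apply, Finset.sum_ite_eq', mul_ite]
    calc ∑ j, y j * A j k = ∑ j, (T (Pi.single k 1)) j * y j := by
          refine Finset.sum_congr rfl fun j _ => ?_
          rw [h2 j, mul_comm]
      _ = 0 := this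
  -- contradiction with real solution
  obtain ⟨x, hx⟩ := h
  have hfb0 : f b ≠ 0 := hfb
  have key : (f b : ℝ) = 0 := by
    rw [hfeval]
    push_cast
    calc (∑ j, (b j : ℝ) * (y j : ℝ))
        = ∑ j, (∑ k, (A j k : ℝ) * x k) * (y j : ℝ) := by
          refine Finset.sum_congr rfl fun j _ => ?_
          rw [hx j]
      _ = ∑ j, ∑ k, ((y j : ℝ) * (A j k : ℝ)) * x k := by
          refine Finset.sum_congr rfl fun j _ => ?_
          rw [Finset.sum_mul]
          refine Finset.sum_congr rfl fun k _ => ?_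
          ring
      _ = ∑ k, ∑ j, ((y j : ℝ) * (A j k : ℝ)) * x k := Finset.sum_comm
      _ = ∑ k, (∑ j, (y j : ℝ) * (A j k : ℝ)) * x k := by
          refine Finset.sum_congr rfl fun k _ => ?_
          rw [Finset.sum_mul]
      _ = 0 := by
          refine Finset.sum_eq_zero fun k _ => ?_
          have := hyA k
          have : (∑ j, (y j : ℝ) * (A j k : ℝ)) = 0 := by
            exact_mod_cast congrArg (fun q : ℚ => (q : ℝ)) this
          rw [this, zero_mul]
  exact hfb0 (by exact_mod_cast key)

/-- If 0 is in the real convex hull of finitely many rational vectors, there is a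
nonnegative rational convex-type combination equal to 0. -/
lemma rat_lambda {n m : ℕ} (c : Fin n → Fin m → ℚ)
    (h : (0 : Fin m → ℝ) ∈ convexHull ℝ (Set.range fun i => fun k => ((c i k : ℝ)))) :
    ∃ lam : Fin n → ℚ, (∀ i, 0 ≤ lam i) ∧ (∃ i, lam i ≠ 0) ∧
      ∀ k, ∑ i, lam i * c i k = 0 := by
  classical
  obtain ⟨ι, hι, z, w, hzr, hindep, hwpos, hwsum, hzsum⟩ :=
    eq_pos_convex_span_of_mem_convexHull h
  -- choose preimages
  have hg : ∀ t : ι, ∃ i : Fin n, (fun k => ((c i k : ℝ))) = z t := fun t => hzr ⟨t, rfl⟩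
  choose g hgc using hg
  -- the rational system: unknowns μ : ι → ℚ
  -- rows: Option (Fin m); A (some k) t = c (g t) k ; A none t = 1
  set A : Option (Fin m) → ι → ℚ := fun j t => Option.rec 1 (fun k => c (g t) k) j with hA
  set b : Option (Fin m) → ℚ := fun j => Option.rec 1 (fun _ => 0) j with hb
  have hreal : ∃ x : ι → ℝ, ∀ j, ∑ t, (A j t : ℝ) * x t = (b j : ℝ) := by
    refine ⟨w, fun j => ?_⟩
    match j with
    | none => simpa [hA, hb] using hwsum
    | some k =>
        have := congrFun hzsum k
        simp only [Finset.sum_apply, Pi.zero_apply] at this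
        simp only [hA, hb]
        push_cast
        rw [← this]
        refine Finset.sum_congr rfl fun t _ => ?_
        rw [← hgc t]
        simp [mul_comm]
  obtain ⟨μ, hμ⟩ := rat_descent A b hreal
  -- lam i := sum of μ t over t with g t = i
  refine ⟨fun i => ∑ t ∈ univ.filter (fun t => g t = i), μ t, ?_, ?_, ?_⟩
  · -- nonnegativity: μ t ≥ 0 since it equals w t by affine independence
    have hμw : ∀ t, (μ t : ℝ) = w t := by
      have hdiff : ∀ t : ι, (fun s => w s - (μ s : ℝ)) t = 0 := by
        have hsum0 : ∑ t, (w t - (μ t : ℝ)) = 0 := by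
          have h1 : ∑ t, (μ t : ℝ) = 1 := by
            have := hμ none
            simp only [hA, hb] at this
            have := congrArg (fun q : ℚ => (q : ℝ)) this
            push_cast at this
            simpa [mul_comm] using this
          rw [Finset.sum_sub_distrib, hwsum, h1, sub_self]
        have hvec0 : ∑ t, (w t - (μ t : ℝ)) • z t = 0 := by
          have h2 : ∑ t, (μ t : ℝ) • z t = 0 := by
            funext k
            simp only [Finset.sum_apply, Pi.zero_apply, Pi.smul_apply, smul_eq_mul]
            have := hμ (some k)
            simp only [hA, hb] at this
            have := congrArg (fun q : ℚ => (q : ℝ)) this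
            push_cast at this
            rw [← this]
            refine Finset.sum_congr rfl fun t _ => ?_
            rw [← hgc t]; ring
          simp only [sub_smul, Finset.sum_sub_distrib, hzsum, h2, sub_self]
        intro t
        exact affineIndependent_iff.1 hindep univ _ hsum0 hvec0 t (mem_univ t)
      intro t
      have := hdiff t
      simp only at this
      linarith
    refine fun i => Finset.sum_nonneg fun t _ => ?_
    have := hμw t
    have hwt := hwpos t
    have : (0:ℝ) ≤ (μ t : ℝ) := by rw [this]; linarith
    exact_mod_cast this
  · -- nontrivial: sums to 1
    by_contra hz
    push_neg at hz
    have : ∑ i, ∑ t ∈ univ.filter (fun t => g t = i), μ t = 1 := by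
      rw [Finset.sum_fiberwise]
      have := hμ none
      simpa [hA, hb, mul_comm] using this
    rw [Finset.sum_congr rfl (fun i _ => hz i)] at this
    simp at this
  · intro k
    have key : ∑ t, μ t * c (g t) k = 0 := by
      have := hμ (some k)
      simpa [hA, hb, mul_comm] using this
    calc ∑ i, (∑ t ∈ univ.filter (fun t => g t = i), μ t) * c i k
        = ∑ i, ∑ t ∈ univ.filter (fun t => g t = i), μ t * c i k := by
          refine Finset.sum_congr rfl fun i _ => ?_
          rw [Finset.sum_mul]
      _ = ∑ i, ∑ t ∈ univ.filter (fun t => g t = i), μ t * c (g t) k := by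
          refine Finset.sum_congr rfl fun i _ => Finset.sum_congr rfl fun t ht => ?_
          rw [(Finset.mem_filter.1 ht).2]
      _ = ∑ t, μ t * c (g t) k := Finset.sum_fiberwise _ _ _
      _ = 0 := key

lemma rat_sep {n m : ℕ} (c : Fin n → Fin m → ℚ)
    (h : (0 : Fin m → ℝ) ∉ convexHull ℝ (Set.range fun i => fun k => ((c i k : ℝ)))) :
    ∃ v : Fin m → ℚ, ∀ i, 0 < ∑ k, c i k * v k := by
  classical
  have hcompact : IsClosed (convexHull ℝ (Set.range fun i => fun k => ((c i k : ℝ)))) :=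
    ((Set.finite_range _).isCompact_convexHull ℝ).isClosed
  obtain ⟨f, u, hfu, hfb⟩ :=
    geometric_hahn_banach_point_closed (convex_convexHull ℝ _) hcompact h
  have hu : 0 < u := by simpa using hfu
  set vr : Fin m → ℝ := fun k => f (Pi.single k 1) with hvr
  have hfc : ∀ i, f (fun k => ((c i k : ℝ))) = ∑ k, (c i k : ℝ) * vr k := by
    intro i
    conv_lhs => rw [pi_eq_sum_univ (fun k => ((c i k : ℝ))), map_sum]
    refine Finset.sum_congr rfl fun k _ => ?_
    rw [map_smul]
    have hps : (fun k1 => if k = k1 then (1:ℝ) else 0) = Pi.single k 1 := by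
      funext k1; simp [Pi.single_apply, eq_comm]
    rw [hps]; simp [hvr, smul_eq_mul]
  have hlb : ∀ i, u < ∑ k, (c i k : ℝ) * vr k := by
    intro i
    rw [← hfc]
    exact hfb _ (subset_convexHull ℝ _ ⟨i, rfl⟩)
  set M : ℝ := ∑ i, ∑ k, |(c i k : ℝ)| with hM
  have hM0 : 0 ≤ M := Finset.sum_nonneg fun i _ => Finset.sum_nonneg fun k _ => abs_nonneg _
  set ε : ℝ := u / (M + 1) with hε
  have hε0 : 0 < ε := div_pos hu (by linarith)
  have hq : ∀ k, ∃ q : ℚ, vr k - ε < q ∧ (q : ℝ) < vr k := by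
    intro k
    exact exists_rat_btwn (by linarith)
  choose q hq1 hq2 using hq
  refine ⟨q, fun i => ?_⟩
  have hMi : ∑ k, |(c i k : ℝ)| ≤ M := by
    refine Finset.single_le_sum (f := fun i => ∑ k, |(c i k : ℝ)|) (fun j _ => ?_) (mem_univ i)
    exact Finset.sum_nonneg fun k _ => abs_nonneg _
  have hdiff : |∑ k, (c i k : ℝ) * ((q k : ℝ) - vr k)| ≤ ∑ k, |(c i k : ℝ)| * ε := by
    calc |∑ k, (c i k : ℝ) * ((q k : ℝ) - vr k)| ≤ ∑ k, |(c i k : ℝ) * ((q k : ℝ) - vr k)| :=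
          Finset.abs_sum_le_sum_abs _ _
      _ ≤ ∑ k, |(c i k : ℝ)| * ε := by
          refine Finset.sum_le_sum fun k _ => ?_
          rw [abs_mul]
          refine mul_le_mul_of_nonneg_left ?_ (abs_nonneg _)
          have := hq1 k; have := hq2 k
          rw [abs_le]; constructor <;> linarith
  have hsumeps : ∑ k, |(c i k : ℝ)| * ε ≤ M * ε := by
    rw [← Finset.sum_mul]
    exact mul_le_mul_of_nonneg_right hMi hε0.le
  have hMe : M * ε < u := by
    have h1 : (0:ℝ) < M + 1 := by linarith
    rw [hε, mul_div_assoc', div_lt_iff₀ h1]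
    nlinarith
  have hreal : 0 < ∑ k, (c i k : ℝ) * (q k : ℝ) := by
    have hsplit : ∑ k, (c i k : ℝ) * (q k : ℝ)
        = ∑ k, (c i k : ℝ) * vr k + ∑ k, (c i k : ℝ) * ((q k : ℝ) - vr k) := by
      rw [← Finset.sum_add_distrib]
      refine Finset.sum_congr rfl fun k _ => ?_
      ring
    have h1 := hlb i
    have h2 := abs_le.1 hdiff
    rw [hsplit]
    linarith [h2.1]
  have : (0 : ℝ) < ((∑ k, c i k * q k : ℚ) : ℝ) := by push_cast; exact hreal
  exact_mod_cast this

lemma gordan {n m : ℕ} (c : Fin n → Fin m → ℚ) :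
    (∀ v : Fin m → ℚ, ∃ i, ∑ k, c i k * v k ≤ 0) ↔
      ∃ lam : Fin n → ℚ, (∀ i, 0 ≤ lam i) ∧ (∃ i, lam i ≠ 0) ∧
        ∀ k, ∑ i, lam i * c i k = 0 := by
  constructor
  · intro hval
    by_contra hno
    have h0 : (0 : Fin m → ℝ) ∉ convexHull ℝ (Set.range fun i => fun k => ((c i k : ℝ))) := by
      intro hmem
      exact hno (rat_lambda c hmem)
    obtain ⟨v, hv⟩ := rat_sep c h0
    obtain ⟨i, hi⟩ := hval v
    exact absurd hi (not_le.2 (hv i))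
  · rintro ⟨lam, hpos, ⟨i0, hi0⟩, hsum⟩ v
    by_contra hc
    push_neg at hc
    have hzero : ∑ i, lam i * (∑ k, c i k * v k) = 0 := by
      calc ∑ i, lam i * (∑ k, c i k * v k)
          = ∑ i, ∑ k, lam i * c i k * v k := by
            refine Finset.sum_congr rfl fun i _ => ?_
            rw [Finset.mul_sum]
            exact Finset.sum_congr rfl fun k _ => by ring
        _ = ∑ k, ∑ i, lam i * c i k * v k := Finset.sum_comm
        _ = ∑ k, (∑ i, lam i * c i k) * v k := by
            refine Finset.sum_congr rfl fun k _ => ?_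
            rw [Finset.sum_mul]
        _ = 0 := by
            refine Finset.sum_eq_zero fun k _ => ?_
            rw [hsum k, zero_mul]
    have hpos' : 0 < ∑ i, lam i * (∑ k, c i k * v k) := by
      refine Finset.sum_pos' (fun i _ => mul_nonneg (hpos i) (hc i).le) ⟨i0, mem_univ i0, ?_⟩
      exact mul_pos ((hpos i0).lt_of_ne (Ne.symm hi0)) (hc i0)
    rw [hzero] at hpos'
    exact lt_irrefl 0 hpos'

lemma msum (N : ℕ) (v : ℕ → ℚ) (s : Multiset ℕ) (hb : ∀ a ∈ s, a < N) :
    (s.map v).sum = ∑ k : Fin N, (s.count (k : ℕ) : ℚ) * v (k : ℕ) := by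
  induction s using Multiset.induction_on with
  | empty => simp
  | cons a s ih =>
    rw [Multiset.map_cons, Multiset.sum_cons,
      ih (fun x hx => hb x (Multiset.mem_cons_of_mem hx))]
    have ha : a < N := hb a (Multiset.mem_cons_self a s)
    have hcnt : ∀ k : Fin N, ((a ::ₘ s).count (k : ℕ) : ℚ)
        = (s.count (k : ℕ) : ℚ) + if k = (⟨a, ha⟩ : Fin N) then 1 else 0 := by
      intro k
      rw [Multiset.count_cons]
      push_cast
      congr 1
      by_cases h : (k : ℕ) = a
      · have : k = (⟨a, ha⟩ : Fin N) := Fin.ext h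
        simp [h, this]
      · have : k ≠ (⟨a, ha⟩ : Fin N) := fun hc => h (by rw [hc])
        simp [h, this]
    calc v a + ∑ k : Fin N, (s.count (k : ℕ) : ℚ) * v (k : ℕ)
        = ∑ k : Fin N, (s.count (k : ℕ) : ℚ) * v (k : ℕ)
          + ∑ k : Fin N, (if k = (⟨a, ha⟩ : Fin N) then 1 else 0) * v (k : ℕ) := by
          have h2 : ∑ k : Fin N, (if k = (⟨a, ha⟩ : Fin N) then (1:ℚ) else 0) * v (k : ℕ)
              = v a := by
            simp [ite_mul]
          rw [add_comm]
          congr 1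
          exact h2.symm
      _ = ∑ k : Fin N, ((a ::ₘ s).count (k : ℕ) : ℚ) * v (k : ℕ) := by
          rw [← Finset.sum_add_distrib]
          refine Finset.sum_congr rfl fun k _ => ?_
          rw [hcnt k]
          ring

/-- An atomic hypersequent is valid over ℚ iff there are nonnegative integers
`λᵢ`, not all zero, with `⋃ᵢ λᵢ·Γᵢ = ⋃ᵢ λᵢ·Δᵢ` as multisets. -/
theorem stmt_6 (G : List (Multiset ℕ × Multiset ℕ)) :
    HValid G ↔
      ∃ lam : Fin G.length → ℕ, (∃ i, lam i ≠ 0) ∧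
        (Finset.univ.sum fun i => lam i • (G.get i).1) =
        (Finset.univ.sum fun i => lam i • (G.get i).2) := by
  classical
  set n := G.length with hn
  set N : ℕ := (∑ i : Fin n, ((G.get i).1.sup ⊔ (G.get i).2.sup)) + 1 with hN
  have hbound : ∀ i : Fin n, (∀ a ∈ (G.get i).1, a < N) ∧ (∀ a ∈ (G.get i).2, a < N) := by
    intro i
    have hle : (G.get i).1.sup ⊔ (G.get i).2.sup
        ≤ ∑ j : Fin n, ((G.get j).1.sup ⊔ (G.get j).2.sup) :=
      Finset.single_le_sum (f := fun j => (G.get j).1.sup ⊔ (G.get j).2.sup)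
        (fun j _ => Nat.zero_le _) (mem_univ i)
    constructor
    · intro a ha
      have := (Multiset.le_sup ha).trans (le_trans le_sup_left hle)
      omega
    · intro a ha
      have := (Multiset.le_sup ha).trans (le_trans le_sup_right hle)
      omega
  set c : Fin n → Fin N → ℚ :=
    fun i k => ((G.get i).1.count (k : ℕ) : ℚ) - ((G.get i).2.count (k : ℕ) : ℚ) with hc
  -- bridge for sums
  have hsum_eq : ∀ (i : Fin n) (v : ℕ → ℚ),
      ∑ k : Fin N, c i k * v (k : ℕ)
        = ((G.get i).1.map v).sum - ((G.get i).2.map v).sum := by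
    intro i v
    rw [msum N v _ (hbound i).1, msum N v _ (hbound i).2, ← Finset.sum_sub_distrib]
    refine Finset.sum_congr rfl fun k _ => ?_
    rw [hc]; ring
  have hbridge : HValid G ↔ ∀ v : Fin N → ℚ, ∃ i : Fin n, ∑ k, c i k * v k ≤ 0 := by
    constructor
    · intro hv v
      obtain ⟨S, hS, hle⟩ := hv (fun a => if h : a < N then v ⟨a, h⟩ else 0)
      obtain ⟨i, rfl⟩ := List.mem_iff_get.1 hS
      refine ⟨i, ?_⟩
      have heq := hsum_eq i (fun a => if h : a < N then v ⟨a, h⟩ else 0)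
      have hvk : ∀ k : Fin N, (fun a => if h : a < N then v ⟨a, h⟩ else 0) (k : ℕ) = v k := by
        intro k; simp [k.isLt]
      have h3 : ∑ k : Fin N, c i k * v k
          = ∑ k : Fin N, c i k * (fun a => if h : a < N then v ⟨a, h⟩ else 0) (k : ℕ) :=
        Finset.sum_congr rfl fun k _ => congrArg (c i k * ·) (hvk k).symm
      rw [h3, heq]
      linarith
    · intro hv v
      obtain ⟨i, hi⟩ := hv (fun k => v (k : ℕ))
      refine ⟨G.get i, List.get_mem G i, ?_⟩
      have := hsum_eq i v
      rw [this] at hi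
      linarith
  rw [hbridge, gordan c]
  constructor
  · rintro ⟨lam, hpos, ⟨i0, hi0⟩, hzero⟩
    set d : ℕ := ∏ i, (lam i).den with hd
    have hd0 : 0 < d := Finset.prod_pos fun i _ => (lam i).pos
    set L : Fin n → ℕ := fun i => (lam i).num.toNat * (d / (lam i).den) with hL
    have hLcast : ∀ i, ((L i : ℕ) : ℚ) = lam i * d := by
      intro i
      have hdvd : (lam i).den ∣ d := Finset.dvd_prod_of_mem _ (mem_univ i)
      have hnum : (((lam i).num.toNat : ℤ) : ℚ) = ((lam i).num : ℚ) := by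
        congr 1
        exact Int.toNat_of_nonneg (Rat.num_nonneg.2 (hpos i))
      rw [hL]
      push_cast
      rw [Nat.cast_div hdvd (by exact_mod_cast (lam i).den_nz)]
      rw [show ((lam i).num.toNat : ℚ) = ((lam i).num : ℚ) by exact_mod_cast hnum]
      rw [mul_div_assoc', mul_comm, mul_div_assoc, Rat.num_div_den, mul_comm]
    refine ⟨L, ⟨i0, ?_⟩, ?_⟩
    · intro hL0
      have h0 : lam i0 * (d : ℚ) = 0 := by
        rw [← hLcast i0, hL0]; norm_num
      have hd0' : (d : ℚ) ≠ 0 := by positivity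
      rcases mul_eq_zero.1 h0 with h | h
      · exact hi0 h
      · exact absurd h hd0'
    · refine Multiset.ext.2 fun a => ?_
      rw [Multiset.count_sum', Multiset.count_sum']
      simp only [Multiset.count_nsmul]
      by_cases ha : a < N
      · have key := hzero ⟨a, ha⟩
        have key2 : ∑ i, (L i : ℚ) * c i ⟨a, ha⟩ = 0 := by
          calc ∑ i, (L i : ℚ) * c i ⟨a, ha⟩
              = d * ∑ i, lam i * c i ⟨a, ha⟩ := by
                rw [Finset.mul_sum]
                refine Finset.sum_congr rfl fun i _ => ?_
                rw [hLcast i]; ring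
            _ = 0 := by rw [key, mul_zero]
        have key3 : ∑ i : Fin n, (L i : ℚ) * ((G.get i).1.count a : ℚ)
            = ∑ i : Fin n, (L i : ℚ) * ((G.get i).2.count a : ℚ) := by
          have hdiff : ∑ i : Fin n, ((L i : ℚ) * ((G.get i).1.count a : ℚ)
              - (L i : ℚ) * ((G.get i).2.count a : ℚ)) = 0 := by
            rw [← key2]
            exact Finset.sum_congr rfl fun i _ => by rw [hc]; ring
          rw [Finset.sum_sub_distrib] at hdiff
          linarith
        have hcast : ((∑ i : Fin n, L i * (G.get i).1.count a : ℕ) : ℚ)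
            = ((∑ i : Fin n, L i * (G.get i).2.count a : ℕ) : ℚ) := by
          push_cast
          exact key3
        exact_mod_cast hcast
      · have h1 : ∀ i : Fin n, (G.get i).1.count a = 0 := fun i =>
          Multiset.count_eq_zero.2 fun hm => ha ((hbound i).1 a hm)
        have h2 : ∀ i : Fin n, (G.get i).2.count a = 0 := fun i =>
          Multiset.count_eq_zero.2 fun hm => ha ((hbound i).2 a hm)
        rw [Finset.sum_eq_zero fun i _ => by rw [h1 i, Nat.mul_zero],
          Finset.sum_eq_zero fun i _ => by rw [h2 i, Nat.mul_zero]]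
  · rintro ⟨lam, ⟨i0, hi0⟩, hmeq⟩
    refine ⟨fun i => (lam i : ℚ), fun i => by positivity, ⟨i0, by simpa using (Nat.cast_ne_zero (R := ℚ)).2 hi0⟩, ?_⟩
    intro k
    have hcount := Multiset.ext.1 hmeq (k : ℕ)
    rw [Multiset.count_sum', Multiset.count_sum'] at hcount
    simp only [Multiset.count_nsmul] at hcount
    have : (↑(∑ i, lam i * (G.get i).1.count (k:ℕ)) : ℚ)
        = (↑(∑ i, lam i * (G.get i).2.count (k:ℕ)) : ℚ) := by exact_mod_cast hcount
    push_cast at this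
    calc ∑ i, (lam i : ℚ) * c i k
        = ∑ i, ((lam i : ℚ) * (G.get i).1.count (k:ℕ) - (lam i : ℚ) * (G.get i).2.count (k:ℕ)) := by
          refine Finset.sum_congr rfl fun i _ => ?_
          rw [hc]; ring
      _ = 0 := by
          rw [Finset.sum_sub_distrib, this, sub_self]
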